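/- arXiv:2002.04257 — 3 statements merged into one kernel-verified Lean document; each statement's English description precedes it below -/
import Mathlib

section
/- Let (Z, E) be a reflexive graph whose relation E is antisymmetric. Then for every z ∈ Z, the extent of the concept z_s ⊓ z_r equals extent(z_s) \ {z}; that is, {z}^{↑↓} ∩ {z}^↓ = {z}^{↑↓} \ {z}. -/
open Set

/-- The object concept `z_s = ({z}^{↑↓}, {z}^↑)`. -/
def objectConcept {A X : Type*} (I : A → X → Prop) (a : A) : Concept A X I where
  extent := lowerPolar I (upperPolar I {a})
  intent := upperPolar I {a}
  upperPolar_extent := upperPolar_lowerPolar_upperPolar I {a}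
  lowerPolar_intent := rfl

/-- The attribute concept `z_r = ({z}^↓, {z}^{↓↑})`. -/
def attributeConcept {A X : Type*} (I : A → X → Prop) (x : X) : Concept A X I where
  extent := lowerPolar I {x}
  intent := upperPolar I (lowerPolar I {x})
  upperPolar_extent := rfl
  lowerPolar_intent := lowerPolar_upperPolar_lowerPolar I {x}

/-- For a reflexive, antisymmetric graph `(Z, E)` and any `z`, the extent of the concept
`z_s ⊓ z_r` equals `extent(z_s) \ {z}`; that is, `{z}^{↑↓} ∩ {z}^↓ = {z}^{↑↓} \ {z}`. -/
theorem extent_inf_objectConcept_attributeConcept {Z : Type*} (E : Z → Z → Prop)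
    (hrefl : Reflexive E)
    (hanti : ∀ z z' : Z, E z z' → E z' z → z = z') (z : Z) :
    (objectConcept (fun a x => ¬ E a x) z ⊓ attributeConcept (fun a x => ¬ E a x) z).extent =
      (objectConcept (fun a x => ¬ E a x) z).extent \ {z} := by
  ext a
  simp only [Concept.extent_min, objectConcept, attributeConcept, Set.mem_inter_iff,
    Set.mem_diff, Set.mem_singleton_iff, lowerPolar, upperPolar,
    Set.mem_setOf_eq, Set.mem_singleton_iff, forall_eq]
  constructor
  · rintro ⟨h1, h2⟩
    refine ⟨h1, ?_⟩
    rintro rfl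
    exact h2 (hrefl a)
  · rintro ⟨h1, h2⟩
    refine ⟨h1, fun haz => ?_⟩
    have hza : E z a := by
      by_contra hza
      exact h1 hza (hrefl a)
    exact h2 (hanti a z haz hza)
end

section
/- Let (Z, E) be a reflexive graph whose relation E is antisymmetric, and suppose the concept lattice of the associated polarity (Z, Z, I_{Eᶜ}) satisfies the completely distributive law. For u ∈ Z define κ(u) := ⨆ {w_s | w ∈ Z, ¬(u_s ≤ w_s)}. Then for every concept c of the associated polarity: u_s ≤ c if and only if ¬(c ≤ κ(u)). -/
open Set

universe u v

lemma mem_intentClosure_singleton {A X : Type*} {I : A → X → Prop} {a : A} {x : X} :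
    x ∈ upperPolar I {a} ↔ I a x :=
  ⟨fun h => h rfl, fun h b hb => by
    rw [mem_singleton_iff] at hb; subst hb; exact h⟩

lemma mem_objectConcept_fst {A X : Type*} (I : A → X → Prop) (a : A) :
    a ∈ (objectConcept I a).extent :=
  subset_lowerPolar_upperPolar I {a} rfl

lemma objectConcept_le_of_mem {A X : Type*} {I : A → X → Prop} {c : Concept A X I} {a : A}
    (ha : a ∈ c.extent) : objectConcept I a ≤ c := by
  have h1 : upperPolar I c.extent ⊆ upperPolar I {a} :=
    upperPolar_anti I (singleton_subset_iff.2 ha)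
  have h2 : lowerPolar I (upperPolar I {a}) ⊆
      lowerPolar I (upperPolar I c.extent) := lowerPolar_anti I h1
  rw [c.upperPolar_extent, c.lowerPolar_intent] at h2
  exact h2

section Aux

variable {Z : Type*} {E : Z → Z → Prop}

/-- Binary distributivity from the completely distributive law at small index types. -/
lemma inf_sup_le_of_hdist
    (hdist : ∀ (ι : Type u) (κ : ι → Type v)
      (f : (i : ι) → κ i → Concept Z Z (fun a x => ¬ E a x)),
      ⨅ i, ⨆ j, f i j = ⨆ g : (i : ι) → κ i, ⨅ i, f i (g i))
    (p q r : Concept Z Z (fun a x => ¬ E a x)) :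
    p ⊓ (q ⊔ r) ≤ (p ⊓ q) ⊔ (p ⊓ r) := by
  classical
  have h := hdist (ULift.{u} Bool) (fun _ => ULift.{v} Bool)
    (fun i j => if i.down then p else if j.down then q else r)
  have hL : (⨅ i : ULift.{u} Bool, ⨆ j : ULift.{v} Bool,
      (if i.down then p else if j.down then q else r)) = p ⊓ (q ⊔ r) := by
    simp [iInf_ulift, iInf_bool_eq, iSup_ulift, iSup_bool_eq]
  rw [hL] at h
  rw [h]
  refine iSup_le fun g => ?_
  by_cases hg : (g (ULift.up false)).down
  · refine le_trans (le_inf ?_ ?_) le_sup_left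
    · exact le_trans (iInf_le _ (ULift.up true)) (by simp)
    · exact le_trans (iInf_le _ (ULift.up false)) (by simp [hg])
  · refine le_trans (le_inf ?_ ?_) le_sup_right
    · exact le_trans (iInf_le _ (ULift.up true)) (by simp)
    · exact le_trans (iInf_le _ (ULift.up false)) (by simp [hg])

end Aux

/-- If `(Z, E)` is a reflexive, antisymmetric graph whose associated concept lattice
satisfies the completely distributive law, and `κ(u) := ⨆ {w_s | ¬ u_s ≤ w_s}`, then for
every concept `c`: `u_s ≤ c` iff `¬ c ≤ κ(u)`. -/
theorem objectConcept_le_iff_not_le_kappa {Z : Type*} (E : Z → Z → Prop)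
    (hrefl : Reflexive E)
    (hanti : ∀ z z' : Z, E z z' → E z' z → z = z')
    (hdist : ∀ (ι : Type u) (κ : ι → Type v)
      (f : (i : ι) → κ i → Concept Z Z (fun a x => ¬ E a x)),
      ⨅ i, ⨆ j, f i j = ⨆ g : (i : ι) → κ i, ⨅ i, f i (g i))
    (u : Z) (c : Concept Z Z (fun a x => ¬ E a x)) :
    objectConcept (fun a x => ¬ E a x) u ≤ c ↔
      ¬ c ≤ sSup {d : Concept Z Z (fun a x => ¬ E a x) | ∃ w : Z,
        d = objectConcept (fun a x => ¬ E a x) w ∧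
        ¬ objectConcept (fun a x => ¬ E a x) u ≤ objectConcept (fun a x => ¬ E a x) w} := by
  classical
  have hu_mem : u ∈ (objectConcept (fun a x => ¬ E a x) u).extent :=
    mem_objectConcept_fst _ u
  constructor
  · -- forward direction
    intro hc hck
    have husk : objectConcept (fun a x => ¬ E a x) u ≤ sSup {d | ∃ w : Z,
        d = objectConcept (fun a x => ¬ E a x) w ∧
        ¬ objectConcept (fun a x => ¬ E a x) u ≤ objectConcept (fun a x => ¬ E a x) w} :=
      hc.trans hck
    have hu_mem_k := husk hu_mem
    -- extract w₁ with E w₁ u and ¬ u_s ≤ w₁_s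
    have hex : ∃ d ∈ {d | ∃ w : Z,
        d = objectConcept (fun a x => ¬ E a x) w ∧
        ¬ objectConcept (fun a x => ¬ E a x) u ≤ objectConcept (fun a x => ¬ E a x) w},
        u ∉ (d : Concept Z Z (fun a x => ¬ E a x)).intent := by
      by_contra h
      push_neg at h
      exact hu_mem_k (mem_iInter₂.2 h) (hrefl u)
    obtain ⟨d, hdS, hd⟩ := hex
    obtain ⟨w₁, rfl, hw₁W⟩ := hdS
    have hEw₁u : E w₁ u := by
      by_contra h
      exact hd (mem_intentClosure_singleton.2 h)
    -- extract the hole x* of w₁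
    have hxstar : ∃ x, E u x ∧ ¬ E w₁ x := by
      by_contra h
      push_neg at h
      apply hw₁W
      have h1 : upperPolar (fun a x => ¬ E a x) {w₁} ⊆
          upperPolar (fun a x => ¬ E a x) {u} := by
        intro t ht
        rw [mem_intentClosure_singleton] at ht ⊢
        intro hEut
        exact ht (h t hEut)
      have h2 := lowerPolar_anti (fun a x => ¬ E a x) h1
      exact h2
    obtain ⟨x, hEux, hnEw₁x⟩ := hxstar
    -- Θ : join of all object concepts of proper out-neighbours of u
    set Θ : Concept Z Z (fun a x => ¬ E a x) := sSup {d | ∃ y : Z,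
      d = objectConcept (fun a x => ¬ E a x) y ∧ E u y ∧ y ≠ u} with hΘ
    -- key : u_s ≤ w₁_s ⊔ Θ
    have keyR : objectConcept (fun a x => ¬ E a x) u ≤
        objectConcept (fun a x => ¬ E a x) w₁ ⊔ Θ := by
      rw [← Concept.intent_subset_intent_iff]
      intro t ht
      rw [Concept.intent_sup] at ht
      obtain ⟨ht1, ht2⟩ := ht
      show t ∈ upperPolar (fun a x => ¬ E a x) {u}
      rw [mem_intentClosure_singleton]
      intro hEut
      by_cases htu : t = u
      · subst htu
        exact ht1 rfl hEw₁u
      · have hmem : objectConcept (fun a x => ¬ E a x) t ∈ {d | ∃ y : Z,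
            d = objectConcept (fun a x => ¬ E a x) y ∧ E u y ∧ y ≠ u} := ⟨t, rfl, hEut, htu⟩
        have := mem_iInter₂.1 ht2 (objectConcept (fun a x => ¬ E a x) t) hmem
        exact this rfl (hrefl t)
    -- u_s ≤ (u_s ⊓ w₁_s) ⊔ (u_s ⊓ Θ)
    have hsplit : objectConcept (fun a x => ¬ E a x) u ≤
        (objectConcept (fun a x => ¬ E a x) u ⊓ objectConcept (fun a x => ¬ E a x) w₁) ⊔
        (objectConcept (fun a x => ¬ E a x) u ⊓ Θ) :=
      (le_inf le_rfl keyR).trans (inf_sup_le_of_hdist hdist _ _ _)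
    have hu_mem' := hsplit hu_mem
    -- u is not in both intents
    have hcases : u ∉ (objectConcept (fun a x => ¬ E a x) u ⊓
          objectConcept (fun a x => ¬ E a x) w₁).intent ∨
        u ∉ (objectConcept (fun a x => ¬ E a x) u ⊓ Θ).intent := by
      by_contra h
      push_neg at h
      exact hu_mem' (mem_inter h.1 h.2) (hrefl u)
    -- from u ∉ (u_s ⊓ e).intent, conclude u ∈ e.extent
    have hkey : ∀ e : Concept Z Z (fun a x => ¬ E a x),
        u ∉ (objectConcept (fun a x => ¬ E a x) u ⊓ e).intent → u ∈ e.extent := by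
      intro e he
      have hex2 : ∃ a ∈ (objectConcept (fun a x => ¬ E a x) u ⊓ e).extent, E a u := by
        by_contra h
        push_neg at h
        exact he fun a ha => h a ha
      obtain ⟨a, ha, hEau⟩ := hex2
      rw [Concept.extent_inf] at ha
      obtain ⟨hau, hae⟩ := ha
      have hEua : E u a := by
        by_contra h
        exact hau (mem_intentClosure_singleton.2 h) (hrefl a)
      have haeq : a = u := hanti a u hEau hEua
      rw [haeq] at hae
      exact hae
    rcases hcases with h1 | h2
    · have hufst := hkey _ h1
      exact hufst (mem_intentClosure_singleton.2 hnEw₁x) hEux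
    · have hufst := hkey _ h2
      have humemΘsnd : u ∈ Θ.intent := by
        refine mem_iInter₂.2 fun d hd => ?_
        obtain ⟨y, rfl, hEuy, hyu⟩ := hd
        refine mem_intentClosure_singleton.2 ?_
        intro hEyu
        exact hyu (hanti y u hEyu hEuy)
      exact hufst humemΘsnd (hrefl u)
  · -- reverse direction
    intro hnc
    by_contra hus
    apply hnc
    intro w hw
    have h1 : objectConcept (fun a x => ¬ E a x) w ≤ c := objectConcept_le_of_mem hw
    have h2 : ¬ objectConcept (fun a x => ¬ E a x) u ≤ objectConcept (fun a x => ¬ E a x) w :=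
      fun h => hus (h.trans h1)
    have h4 : objectConcept (fun a x => ¬ E a x) w ≤ sSup {d | ∃ w : Z,
        d = objectConcept (fun a x => ¬ E a x) w ∧
        ¬ objectConcept (fun a x => ¬ E a x) u ≤ objectConcept (fun a x => ¬ E a x) w} :=
      le_sSup ⟨w, rfl, h2⟩
    exact h4 (mem_objectConcept_fst _ w)
end

section
/- Let (Z, E) be a reflexive graph whose relation E is antisymmetric, and suppose the concept lattice of the associated polarity (Z, Z, I_{Eᶜ}) satisfies the completely distributive law. For u ∈ Z define κ(u) := ⨆ {w_s | w ∈ Z, ¬(u_s ≤ w_s)}. Then κ(u) is completely meet-irreducible: for every set S of concepts with sInf S = κ(u), one has κ(u) ∈ S. -/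
open Set

universe u v

/-- The attribute concept `z_r = ({z}^↓, {z}^{↓↑})`. -/
def attrConcept {A X : Type*} (I : A → X → Prop) (x : X) : Concept A X I where
  extent := lowerPolar I {x}
  intent := upperPolar I (lowerPolar I {x})
  upperPolar_extent := rfl
  lowerPolar_intent := lowerPolar_upperPolar_lowerPolar I {x}

lemma objectConcept_le_iff {A X : Type*} (I : A → X → Prop) (a : A) (c : Concept A X I) :
    objectConcept I a ≤ c ↔ a ∈ c.extent := by
  constructor
  · intro h
    exact Concept.extent_subset_extent_iff.mpr h (mem_objectConcept_fst I a)
  · intro ha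
    rw [← Concept.extent_subset_extent_iff]
    intro b hb
    rw [← c.lowerPolar_intent]
    intro x hx
    have hx' : x ∈ upperPolar I c.extent := by rw [c.upperPolar_extent]; exact hx
    exact hb (upperPolar_anti I (singleton_subset_iff.mpr ha) hx')

/-- The `Bool`-indexed family used for the binary distributivity instance. -/
def distFamily {Z : Type*} (E : Z → Z → Prop) (u w : Z) :
    ULift.{u} Bool → ULift.{v} Bool → Concept Z Z (fun a x => ¬ E a x)
  | ⟨false⟩, _ => objectConcept (fun a x => ¬ E a x) u
  | ⟨true⟩, ⟨false⟩ => attrConcept (fun a x => ¬ E a x) u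
  | ⟨true⟩, ⟨true⟩ => objectConcept (fun a x => ¬ E a x) w

/-- If `(Z, E)` is a reflexive, antisymmetric graph whose associated concept lattice
satisfies the completely distributive law, and `κ(u) := ⨆ {w_s | ¬ u_s ≤ w_s}`, then
`κ(u)` is completely meet-irreducible: any set of concepts whose infimum is `κ(u)`
contains `κ(u)`. -/
theorem kappa_completely_meet_irreducible {Z : Type*} (E : Z → Z → Prop)
    (hrefl : Reflexive E)
    (hanti : ∀ z z' : Z, E z z' → E z' z → z = z')
    (hdist : ∀ (ι : Type u) (κ : ι → Type v)
      (f : (i : ι) → κ i → Concept Z Z (fun a x => ¬ E a x)),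
      ⨅ i, ⨆ j, f i j = ⨆ g : (i : ι) → κ i, ⨅ i, f i (g i))
    (u : Z) (S : Set (Concept Z Z (fun a x => ¬ E a x)))
    (hS : sInf S = sSup {d : Concept Z Z (fun a x => ¬ E a x) | ∃ w : Z,
        d = objectConcept (fun a x => ¬ E a x) w ∧
        ¬ objectConcept (fun a x => ¬ E a x) u ≤ objectConcept (fun a x => ¬ E a x) w}) :
    sSup {d : Concept Z Z (fun a x => ¬ E a x) | ∃ w : Z,
        d = objectConcept (fun a x => ¬ E a x) w ∧
        ¬ objectConcept (fun a x => ¬ E a x) u ≤ objectConcept (fun a x => ¬ E a x) w} ∈ S := by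
  classical
  set Wc : Set (Concept Z Z (fun a x => ¬ E a x)) :=
    {d : Concept Z Z (fun a x => ¬ E a x) | ∃ w : Z,
        d = objectConcept (fun a x => ¬ E a x) w ∧
        ¬ objectConcept (fun a x => ¬ E a x) u ≤ objectConcept (fun a x => ¬ E a x) w}
    with hWc
  by_contra hK
  -- Step 1: every element of `S` is above `u_s`.
  have hstep1 : ∀ c ∈ S, objectConcept (fun a x => ¬ E a x) u ≤ c := by
    intro c hc
    by_contra hnle
    have hcK : c ≤ sSup Wc := by
      rw [← Concept.extent_subset_extent_iff]
      intro w0 hw0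
      have hmem : objectConcept (fun a x => ¬ E a x) w0 ∈ Wc := by
        rw [hWc]
        exact ⟨w0, rfl, fun hle =>
          hnle (hle.trans ((objectConcept_le_iff _ _ _).mpr hw0))⟩
      exact Concept.extent_subset_extent_iff.mpr (le_sSup hmem) (mem_objectConcept_fst _ w0)
    have hKc : sSup Wc ≤ c := hS ▸ sInf_le hc
    exact hK (le_antisymm hcK hKc ▸ hc)
  have hus : objectConcept (fun a x => ¬ E a x) u ≤ sSup Wc := hS ▸ le_sInf hstep1
  have huK : u ∈ (sSup Wc).extent :=
    Concept.extent_subset_extent_iff.mpr hus (mem_objectConcept_fst _ u)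
  -- Step 2: extract `w` with `¬ u_s ≤ w_s` and `E w u`.
  obtain ⟨w, hwW, hEwu⟩ : ∃ w : Z,
      ¬ objectConcept (fun a x => ¬ E a x) u ≤ objectConcept (fun a x => ¬ E a x) w ∧ E w u := by
    by_contra h
    push_neg at h
    have husnd : u ∈ (sSup Wc).intent := by
      rw [Concept.intent_sSup]
      refine mem_iInter₂.mpr ?_
      rintro d hd
      rw [hWc] at hd
      obtain ⟨w, rfl, hle⟩ := hd
      intro a ha
      rw [mem_singleton_iff] at ha
      subst ha
      exact h a hle
    have hext : u ∈ lowerPolar (fun a x => ¬ E a x) (sSup Wc).intent := by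
      rw [(sSup Wc).lowerPolar_intent]; exact huK
    exact hext husnd (hrefl u)
  -- Step 3: binary distributivity instance.
  set F : ULift.{u} Bool → ULift.{v} Bool → Concept Z Z (fun a x => ¬ E a x) :=
    distFamily E u w with hF
  have h1 : objectConcept (fun a x => ¬ E a x) u ≤ ⨅ i, ⨆ j, F i j := by
    refine le_iInf fun i => ?_
    obtain ⟨b⟩ := i
    cases b with
    | false =>
        have : objectConcept (fun a x => ¬ E a x) u = F ⟨false⟩ ⟨false⟩ := rfl
        exact this.le.trans (le_iSup _ (⟨false⟩ : ULift.{v} Bool))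
    | true =>
        have hsup : F ⟨true⟩ ⟨true⟩ ⊔ F ⟨true⟩ ⟨false⟩ ≤ ⨆ j, F ⟨true⟩ j :=
          sup_le (le_iSup _ _) (le_iSup _ _)
        refine le_trans ?_ hsup
        rw [objectConcept_le_iff]
        show u ∈ lowerPolar (fun a x => ¬ E a x)
          ((objectConcept (fun a x => ¬ E a x) w).intent ∩
            (attrConcept (fun a x => ¬ E a x) u).intent)
        intro t ht
        obtain ⟨ht1, ht2⟩ := ht
        intro hEut
        have hEtu : E t u := by
          by_contra hntu
          have htm : t ∈ lowerPolar (fun a x => ¬ E a x) {u} := by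
            intro y hy
            rw [mem_singleton_iff] at hy
            subst hy
            exact hntu
          exact ht2 htm (hrefl t)
        have htu : t = u := hanti t u hEtu hEut
        exact ht1 (mem_singleton w) (by rw [htu]; exact hEwu)
  have h3 : objectConcept (fun a x => ¬ E a x) u ≤
      ⨆ g : ULift.{u} Bool → ULift.{v} Bool, ⨅ i, F i (g i) :=
    h1.trans (hdist (ULift.{u} Bool) (fun _ => ULift.{v} Bool) F).le
  have huf : u ∈ (⨆ g : ULift.{u} Bool → ULift.{v} Bool, ⨅ i, F i (g i)).extent :=
    Concept.extent_subset_extent_iff.mpr h3 (mem_objectConcept_fst _ u)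
  have husnd : u ∈ (⨆ g : ULift.{u} Bool → ULift.{v} Bool, ⨅ i, F i (g i)).intent := by
    show u ∈ (sSup (Set.range fun g : ULift.{u} Bool → ULift.{v} Bool => ⨅ i, F i (g i))).intent
    rw [Concept.intent_sSup]
    refine mem_iInter₂.mpr ?_
    rintro d ⟨g, rfl⟩
    show u ∈ (sInf (Set.range fun i => F i (g i))).intent
    rw [Concept.intent_sInf]
    intro a ha
    have haU : a ∈ (objectConcept (fun a x => ¬ E a x) u).extent :=
      mem_iInter₂.mp ha _ ⟨⟨false⟩, rfl⟩
    have haT : a ∈ (F ⟨true⟩ (g ⟨true⟩)).extent :=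
      mem_iInter₂.mp ha _ ⟨⟨true⟩, rfl⟩
    intro hEau
    have hEua : E u a := by
      by_contra hnua
      have ham : a ∈ upperPolar (fun a x => ¬ E a x) {u} := by
        intro y hy
        rw [mem_singleton_iff] at hy
        subst hy
        exact hnua
      exact haU ham (hrefl a)
    have hau : a = u := hanti a u hEau hEua
    rcases hgt : g ⟨true⟩ with ⟨bt⟩
    rw [hgt] at haT
    cases bt with
    | false =>
        have haT' : a ∈ lowerPolar (fun a x => ¬ E a x) {u} := haT
        exact haT' (mem_singleton u) hEau
    | true =>
        have haT' : a ∈ (objectConcept (fun a x => ¬ E a x) w).extent := haT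
        exact hwW ((objectConcept_le_iff _ _ _).mpr (hau ▸ haT'))
  have hext : u ∈ lowerPolar (fun a x => ¬ E a x)
      (⨆ g : ULift.{u} Bool → ULift.{v} Bool, ⨅ i, F i (g i)).intent := by
    rw [(⨆ g : ULift.{u} Bool → ULift.{v} Bool, ⨅ i, F i (g i)).lowerPolar_intent]
    exact huf
  exact hext husnd (hrefl u)
end
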